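/- For ω > 0, g₁ ≥ 0, and nonnegative integer λ, the polynomial p_λ^B(x) = ([g₁+1/2]_λ / (−ω)^λ) · ₁F₁(−λ; g₁+1/2; ωx²) satisfies the differential equation −p''(x) − (2g₁/x)·p'(x) + 2ωx·p'(x) = 4ωλ·p(x) for all x ≠ 0. -/

import Mathlib

open Finset Nat

/-- Terminating confluent hypergeometric series
`₁F₁(−l; b; z) = ∑_{m=0}^l [−l]_m z^m / ([b]_m m!)`. -/
noncomputable def oneFone (l : ℕ) (b z : ℝ) : ℝ :=
  ∑ m ∈ Finset.range (l + 1),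
    (ascPochhammer ℝ m).eval (-(l : ℝ)) * z ^ m /
      ((ascPochhammer ℝ m).eval b * (m ! : ℝ))

/-- `p_l^B(x) = ([g₁+1/2]_l/(−ω)^l) ₁F₁(−l; g₁+1/2; ωx²)`. -/
noncomputable def pB (g₁ ω : ℝ) (l : ℕ) (x : ℝ) : ℝ :=
  ((ascPochhammer ℝ l).eval (g₁ + 1 / 2) / (-ω) ^ l) *
    oneFone l (g₁ + 1 / 2) (ω * x ^ 2)

noncomputable def Acoef (g₁ ω : ℝ) (l m : ℕ) : ℝ :=
  ((ascPochhammer ℝ l).eval (g₁ + 1 / 2) / (-ω) ^ l) *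
    ((ascPochhammer ℝ m).eval (-(l : ℝ)) * ω ^ m /
      ((ascPochhammer ℝ m).eval (g₁ + 1 / 2) * (m ! : ℝ)))

lemma pB_eq (g₁ ω : ℝ) (l : ℕ) (x : ℝ) :
    pB g₁ ω l x = ∑ m ∈ Finset.range (l + 1), Acoef g₁ ω l m * x ^ (2 * m) := by
  unfold pB oneFone Acoef
  rw [Finset.mul_sum]
  refine Finset.sum_congr rfl fun m _ => ?_
  rw [mul_pow, ← pow_mul]
  ring

lemma Arec (g₁ ω : ℝ) (hg : 0 ≤ g₁) (l m : ℕ) :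
    Acoef g₁ ω l (m + 1) * ((g₁ + 1/2 + m) * (m + 1)) =
      ω * ((m : ℝ) - l) * Acoef g₁ ω l m := by
  have h1 : (0:ℝ) < (ascPochhammer ℝ m).eval (g₁ + 1 / 2) :=
    ascPochhammer_pos m _ (by linarith)
  have h2 : (0:ℝ) < g₁ + 1/2 + m := by positivity
  have h3 : ((m ! : ℝ)) ≠ 0 := by positivity
  have h4 : ((m : ℝ) + 1) ≠ 0 := by positivity
  have key : ((ascPochhammer ℝ (m+1)).eval (-(l : ℝ)) * ω ^ (m+1) /
        ((ascPochhammer ℝ (m+1)).eval (g₁ + 1 / 2) * ((m+1)! : ℝ))) *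
        ((g₁ + 1/2 + m) * (m + 1)) =
      ω * ((m : ℝ) - l) *
        ((ascPochhammer ℝ m).eval (-(l : ℝ)) * ω ^ m /
          ((ascPochhammer ℝ m).eval (g₁ + 1 / 2) * (m ! : ℝ))) := by
    have hD1 : (ascPochhammer ℝ m).eval (g₁ + 1 / 2) * (g₁ + 1 / 2 + (m:ℝ)) *
        (((m:ℝ) + 1) * (m ! : ℝ)) ≠ 0 :=
      mul_ne_zero (mul_ne_zero (ne_of_gt h1) (ne_of_gt h2)) (mul_ne_zero h4 h3)
    have hD2 : (ascPochhammer ℝ m).eval (g₁ + 1 / 2) * (m ! : ℝ) ≠ 0 :=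
      mul_ne_zero (ne_of_gt h1) h3
    rw [ascPochhammer_succ_eval, ascPochhammer_succ_eval, Nat.factorial_succ]
    push_cast
    rw [div_mul_eq_mul_div, ← mul_div_assoc, div_eq_div_iff hD1 hD2]
    ring
  unfold Acoef
  rw [mul_assoc, key]
  ring

/-- The Laguerre-type differential equation
`−p'' − (2g₁/x)p' + 2ωx·p' = 4ωl·p` for `p = p_l^B`, valid for `x ≠ 0`. -/
theorem stmt7 (ω g₁ : ℝ) (hω : 0 < ω) (hg : 0 ≤ g₁) (l : ℕ) (x : ℝ) (hx : x ≠ 0) :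
    -(deriv (deriv (pB g₁ ω l)) x) - 2 * g₁ / x * deriv (pB g₁ ω l) x +
        2 * ω * x * deriv (pB g₁ ω l) x =
      4 * ω * l * pB g₁ ω l x := by
  set A := Acoef g₁ ω l with hA
  have hd1 : ∀ y : ℝ, deriv (pB g₁ ω l) y =
      ∑ m ∈ Finset.range (l + 1), A m * (2 * m) * y ^ (2 * m - 1) := by
    intro y
    have hfeq : pB g₁ ω l = fun y => ∑ m ∈ Finset.range (l + 1), A m * y ^ (2 * m) := by
      funext z; exact pB_eq g₁ ω l z
    rw [hfeq]
    have : HasDerivAt (fun y : ℝ => ∑ m ∈ Finset.range (l + 1), A m * y ^ (2 * m))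
        (∑ m ∈ Finset.range (l + 1), A m * (2 * m) * y ^ (2 * m - 1)) y := by
      refine HasDerivAt.fun_sum fun m _ => ?_
      have := (hasDerivAt_pow (2 * m) y).const_mul (A m)
      refine this.congr_deriv ?_
      push_cast
      ring
    exact this.deriv
  have hd2 : deriv (deriv (pB g₁ ω l)) x =
      ∑ m ∈ Finset.range (l + 1), A m * (2 * m) * ((2 * m - 1 : ℕ) : ℝ) * x ^ (2 * m - 2) := by
    have hfun : deriv (pB g₁ ω l) =
        fun y => ∑ m ∈ Finset.range (l + 1), A m * (2 * m) * y ^ (2 * m - 1) := funext hd1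
    rw [hfun]
    have : HasDerivAt
        (fun y : ℝ => ∑ m ∈ Finset.range (l + 1), A m * (2 * m) * y ^ (2 * m - 1))
        (∑ m ∈ Finset.range (l + 1), A m * (2 * m) * ((2 * m - 1 : ℕ) : ℝ) * x ^ (2 * m - 2)) x := by
      refine HasDerivAt.fun_sum fun m _ => ?_
      have := (hasDerivAt_pow (2 * m - 1) x).const_mul (A m * (2 * m))
      refine this.congr_deriv ?_
      have e : 2 * m - 1 - 1 = 2 * m - 2 := by omega
      rw [e]
      ring
    exact this.deriv
  rw [hd2, hd1, pB_eq]
  -- transform the g₁ term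
  have hgx : 2 * g₁ / x * (∑ m ∈ Finset.range (l + 1), A m * (2 * m) * x ^ (2 * m - 1))
      = ∑ m ∈ Finset.range (l + 1), 2 * g₁ * (A m * (2 * m)) * x ^ (2 * m - 2) := by
    rw [div_mul_eq_mul_div, Finset.mul_sum, Finset.sum_div]
    refine Finset.sum_congr rfl fun m _ => ?_
    match m with
    | 0 => simp
    | k + 1 =>
      have e : 2 * (k + 1) - 1 = (2 * (k + 1) - 2) + 1 := by omega
      rw [e, pow_succ]
      field_simp
  have hx1 : 2 * ω * x * (∑ m ∈ Finset.range (l + 1), A m * (2 * m) * x ^ (2 * m - 1))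
      = ∑ m ∈ Finset.range (l + 1), 4 * ω * m * A m * x ^ (2 * m) := by
    rw [Finset.mul_sum]
    refine Finset.sum_congr rfl fun m _ => ?_
    match m with
    | 0 => simp
    | k + 1 =>
      have e : 2 * (k + 1) = (2 * (k + 1) - 1) + 1 := by omega
      rw [e, pow_succ]
      push_cast
      ring
  rw [hgx, hx1]
  have comb : (∑ m ∈ Finset.range (l + 1), A m * (2 * m) * ((2 * m - 1 : ℕ) : ℝ) * x ^ (2 * m - 2))
      + (∑ m ∈ Finset.range (l + 1), 2 * g₁ * (A m * (2 * m)) * x ^ (2 * m - 2))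
      = ∑ m ∈ Finset.range (l + 1),
          A m * (2 * m) * (((2 * m - 1 : ℕ) : ℝ) + 2 * g₁) * x ^ (2 * m - 2) := by
    rw [← Finset.sum_add_distrib]
    exact Finset.sum_congr rfl fun m _ => by ring
  have key : (∑ m ∈ Finset.range (l + 1),
        A m * (2 * m) * (((2 * m - 1 : ℕ) : ℝ) + 2 * g₁) * x ^ (2 * m - 2))
      = ∑ m ∈ Finset.range (l + 1), 4 * ω * ((m : ℝ) - l) * A m * x ^ (2 * m) := by
    rw [Finset.sum_range_succ', Finset.sum_range_succ]
    have h0 : A 0 * (2 * (0:ℕ)) * (((2 * 0 - 1 : ℕ) : ℝ) + 2 * g₁) * x ^ (2 * 0 - 2) = 0 := by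
      simp
    have hl : 4 * ω * ((l : ℝ) - l) * A l * x ^ (2 * l) = 0 := by
      simp
    rw [h0, hl, add_zero, add_zero]
    refine Finset.sum_congr rfl fun k _ => ?_
    have e1 : 2 * (k + 1) - 2 = 2 * k := by omega
    have e2 : 2 * (k + 1) - 1 = 2 * k + 1 := by omega
    rw [e1, e2]
    push_cast
    have := Arec g₁ ω hg l k
    rw [hA]
    linear_combination (4 * x ^ (2 * k)) * this
  have last : 4 * ω * l * (∑ m ∈ Finset.range (l + 1), A m * x ^ (2 * m))
      + (∑ m ∈ Finset.range (l + 1), 4 * ω * ((m : ℝ) - l) * A m * x ^ (2 * m))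
      = ∑ m ∈ Finset.range (l + 1), 4 * ω * m * A m * x ^ (2 * m) := by
    rw [Finset.mul_sum, ← Finset.sum_add_distrib]
    exact Finset.sum_congr rfl fun m _ => by ring
  linear_combination (-1 : ℝ) * comb + (-1 : ℝ) * key + (-1 : ℝ) * last
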